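/- Let X, Y be invertible matrices (or invertible Hilbert space operators) and ν a real number. Define the quadratic weighted geometric mean X ⓢ_ν Y := X* (|Y X⁻¹|²)^ν X, where |C|² = C*C. Then X ⓢ_ν Y = |X|² #_ν |Y|², where #_ν is the weighted geometric mean of positive definite elements. -/

import Mathlib

open Matrix ComplexOrder

/-- Real power of a Hermitian matrix via the spectral theorem (functional calculus);
junk value `0` for non-Hermitian matrices. -/
noncomputable def Matrix.hrpow {n : ℕ} (A : Matrix (Fin n) (Fin n) ℂ) (r : ℝ) :
    Matrix (Fin n) (Fin n) ℂ :=
  if h : A.IsHermitian then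
    (h.eigenvectorUnitary : Matrix (Fin n) (Fin n) ℂ) *
      Matrix.diagonal (fun i => ((h.eigenvalues i ^ r : ℝ) : ℂ)) *
      (h.eigenvectorUnitary : Matrix (Fin n) (Fin n) ℂ)ᴴ
  else 0

/-- Weighted geometric mean `A #_ν B` of positive definite matrices:
`A^{1/2} (A^{-1/2} B A^{-1/2})^ν A^{1/2}`. -/
noncomputable def Matrix.gmean {n : ℕ} (A B : Matrix (Fin n) (Fin n) ℂ) (ν : ℝ) :
    Matrix (Fin n) (Fin n) ℂ :=
  A.hrpow (1/2) * ((A.hrpow (-(1/2)) * B * A.hrpow (-(1/2))).hrpow ν) * A.hrpow (1/2)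

/-- Quadratic weighted geometric mean `X ⓢ_ν Y = X* (|Y X⁻¹|²)^ν X`. -/
noncomputable def Matrix.qgmean {n : ℕ} (X Y : Matrix (Fin n) (Fin n) ℂ) (ν : ℝ) :
    Matrix (Fin n) (Fin n) ℂ :=
  Xᴴ * ((Y * X⁻¹)ᴴ * (Y * X⁻¹)).hrpow ν * X

section Aux

variable {n : ℕ}

lemma hrpow_eq_cfc {A : Matrix (Fin n) (Fin n) ℂ} (hA : A.IsHermitian) (r : ℝ) :
    A.hrpow r = cfc (fun x : ℝ => x ^ r) A := by
  rw [Matrix.hrpow, dif_pos hA, hA.cfc_eq]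
  rfl

lemma matrix_spectrum_finite {A : Matrix (Fin n) (Fin n) ℂ} (hA : A.IsHermitian) :
    (spectrum ℝ A).Finite := by
  rw [hA.spectrum_real_eq_range_eigenvalues]
  exact Set.finite_range _

lemma matrix_continuousOn {A : Matrix (Fin n) (Fin n) ℂ} (hA : A.IsHermitian) (f : ℝ → ℝ) :
    ContinuousOn f (spectrum ℝ A) := by
  have : Finite (spectrum ℝ A) := (matrix_spectrum_finite hA).to_subtype
  rw [continuousOn_iff_continuous_restrict]
  exact continuous_of_discreteTopology

/-- Conjugation by a unitary as a star algebra homomorphism. -/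
noncomputable def conjSAH (U : Matrix (Fin n) (Fin n) ℂ)
    (hU : U ∈ unitary (Matrix (Fin n) (Fin n) ℂ)) :
    Matrix (Fin n) (Fin n) ℂ →⋆ₐ[ℂ] Matrix (Fin n) (Fin n) ℂ where
  toFun A := U * A * star U
  map_one' := by simpa using Unitary.mul_star_self_of_mem hU
  map_mul' A B := by
    have h : star U * U = 1 := Unitary.star_mul_self_of_mem hU
    simp only [mul_assoc]
    rw [← mul_assoc (star U) U (B * star U), h, one_mul]
  map_zero' := by simp
  map_add' A B := by simp [mul_add, add_mul]
  commutes' r := by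
    simp only [Algebra.algebraMap_eq_smul_one, mul_smul_comm, smul_mul_assoc, mul_one,
      Unitary.mul_star_self_of_mem hU]
  map_star' A := by simp [mul_assoc]

lemma hrpow_conj {A U : Matrix (Fin n) (Fin n) ℂ} (hA : A.IsHermitian)
    (hU : U ∈ unitary (Matrix (Fin n) (Fin n) ℂ)) (r : ℝ) :
    (U * A * star U).hrpow r = U * A.hrpow r * star U := by
  have hA' : IsSelfAdjoint A := hA
  have hUA : IsSelfAdjoint (U * A * star U) := hA'.conjugate U
  have : CompactSpace (spectrum ℝ A) :=
    isCompact_iff_compactSpace.mp (matrix_spectrum_finite hA).isCompact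
  have hcont : Continuous (conjSAH U hU) := by
    show Continuous fun A : Matrix (Fin n) (Fin n) ℂ => U * A * star U
    exact (continuous_const.matrix_mul continuous_id).matrix_mul continuous_const
  have := StarAlgHomClass.map_cfc (S := ℂ) (conjSAH U hU) (fun x : ℝ => x ^ r) A
    (matrix_continuousOn hA _) hcont hA' hUA
  rw [hrpow_eq_cfc hUA, hrpow_eq_cfc hA]
  exact this.symm

lemma spec_pos {P : Matrix (Fin n) (Fin n) ℂ} (hP : P.PosDef) :
    ∀ x ∈ spectrum ℝ P, 0 < x := by
  intro x hx
  rw [hP.1.spectrum_real_eq_range_eigenvalues] at hx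
  obtain ⟨i, rfl⟩ := hx
  exact hP.eigenvalues_pos i

lemma hrpow_isHermitian {P : Matrix (Fin n) (Fin n) ℂ} (hP : P.IsHermitian) (r : ℝ) :
    (P.hrpow r).IsHermitian := by
  rw [hrpow_eq_cfc hP]
  exact cfc_predicate (fun x : ℝ => x ^ r) P

lemma hrpow_mul_hrpow {P : Matrix (Fin n) (Fin n) ℂ} (hP : P.PosDef) (a b : ℝ) :
    P.hrpow a * P.hrpow b = P.hrpow (a + b) := by
  have h := hP.1
  rw [hrpow_eq_cfc h, hrpow_eq_cfc h, hrpow_eq_cfc h,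
    ← cfc_mul _ _ P (matrix_continuousOn h _) (matrix_continuousOn h _)]
  exact cfc_congr fun x hx => (Real.rpow_add (spec_pos hP x hx) a b).symm

lemma hrpow_zero {P : Matrix (Fin n) (Fin n) ℂ} (hP : P.IsHermitian) :
    P.hrpow 0 = 1 := by
  have hP' : IsSelfAdjoint P := hP
  rw [hrpow_eq_cfc hP]
  simp only [Real.rpow_zero]
  exact cfc_const_one ℝ P hP'

lemma hrpow_one {P : Matrix (Fin n) (Fin n) ℂ} (hP : P.IsHermitian) :
    P.hrpow 1 = P := by
  have hP' : IsSelfAdjoint P := hP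
  rw [hrpow_eq_cfc hP]
  simp only [Real.rpow_one]
  exact cfc_id' ℝ P hP'

end Aux

theorem stmt_14 {n : ℕ} (X Y : Matrix (Fin n) (Fin n) ℂ)
    (hX : IsUnit X) (hY : IsUnit Y) (ν : ℝ) :
    X.qgmean Y ν = (Xᴴ * X).gmean (Yᴴ * Y) ν := by
  have hXdet : IsUnit X.det := (Matrix.isUnit_iff_isUnit_det X).mp hX
  have hXinvX : X⁻¹ * X = 1 := Matrix.nonsing_inv_mul X hXdet
  have hXXinv : X * X⁻¹ = 1 := Matrix.mul_nonsing_inv X hXdet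
  set P := Xᴴ * X with hPdef
  set Q := Yᴴ * Y with hQdef
  have hP : P.PosDef := by
    refine Matrix.PosDef.of_dotProduct_mulVec_pos (Matrix.isHermitian_conjTranspose_mul_self X) fun v hv => ?_
    rw [← Matrix.mulVec_mulVec, Matrix.dotProduct_mulVec, ← Matrix.star_mulVec]
    refine Matrix.dotProduct_star_self_pos_iff.mpr fun h => hv ?_
    have : X⁻¹ *ᵥ (X *ᵥ v) = v := by
      rw [Matrix.mulVec_mulVec, hXinvX, Matrix.one_mulVec]
    rw [← this, h, Matrix.mulVec_zero]
  set S := P.hrpow (1/2) with hSdef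
  set T := P.hrpow (-(1/2)) with hTdef
  have hSh : S.IsHermitian := hrpow_isHermitian hP.1 _
  have hTh : T.IsHermitian := hrpow_isHermitian hP.1 _
  have hTS : T * S = 1 := by
    rw [hTdef, hSdef, hrpow_mul_hrpow hP]
    norm_num [hrpow_zero hP.1]
  have hST : S * T = 1 := by
    rw [hTdef, hSdef, hrpow_mul_hrpow hP]
    norm_num [hrpow_zero hP.1]
  have hSS : S * S = P := by
    rw [hSdef, hrpow_mul_hrpow hP]
    norm_num [hrpow_one hP.1]
  set U := X * T with hUdef
  have hstarU : star U = T * Xᴴ := by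
    rw [hUdef, Matrix.star_eq_conjTranspose, Matrix.conjTranspose_mul, hTh.eq]
  have hUstarU : U * star U = 1 := by
    have h1 : star U * U = 1 := by
      rw [hstarU, hUdef]
      calc T * Xᴴ * (X * T) = T * ((Xᴴ * X) * T) := by simp only [mul_assoc]
        _ = T * (S * (S * T)) := by rw [← hPdef, ← hSS, mul_assoc]
        _ = (T * S) * (S * T) := by simp only [mul_assoc]
        _ = 1 := by rw [hTS, hST, one_mul]
    exact mul_eq_one_comm.mp h1
  have hU : U ∈ unitary (Matrix (Fin n) (Fin n) ℂ) :=
    ⟨mul_eq_one_comm.mpr hUstarU, hUstarU⟩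
  have hXinv : X⁻¹ = T * star U :=
    Matrix.inv_eq_right_inv (by rw [← mul_assoc, ← hUdef, hUstarU])
  set M := T * Q * T with hMdef
  have hQh : Q.IsHermitian := Matrix.isHermitian_conjTranspose_mul_self Y
  have hMh : M.IsHermitian := by
    rw [Matrix.IsHermitian, hMdef, Matrix.conjTranspose_mul, Matrix.conjTranspose_mul,
      hTh.eq, hQh.eq]
    simp only [hQdef, mul_assoc]
  have hmid : (Y * X⁻¹)ᴴ * (Y * X⁻¹) = U * M * star U := by
    have hXinvH : (X⁻¹)ᴴ = U * T := by
      rw [hXinv, Matrix.conjTranspose_mul, ← Matrix.star_eq_conjTranspose (star U),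
        star_star, hTh.eq]
    rw [Matrix.conjTranspose_mul, hXinvH, hXinv, hMdef, hQdef]
    simp only [mul_assoc]
  have hXHU : Xᴴ * U = S := by
    calc Xᴴ * (X * T) = (Xᴴ * X) * T := by rw [mul_assoc]
      _ = (S * S) * T := by rw [← hPdef, ← hSS]
      _ = S * (S * T) := by rw [mul_assoc]
      _ = S := by rw [hST, mul_one]
  have hUHX : star U * X = S := by
    calc star U * X = T * (Xᴴ * X) := by rw [hstarU, mul_assoc]
      _ = T * (S * S) := by rw [← hPdef, ← hSS]
      _ = (T * S) * S := by rw [mul_assoc]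
      _ = S := by rw [hTS, one_mul]
  rw [Matrix.qgmean, Matrix.gmean, hmid, hrpow_conj hMh hU]
  rw [← hSdef, ← hTdef, ← hMdef]
  calc Xᴴ * (U * M.hrpow ν * star U) * X
      = (Xᴴ * U) * (M.hrpow ν * (star U * X)) := by simp only [mul_assoc]
    _ = S * M.hrpow ν * S := by rw [hXHU, hUHX, mul_assoc]
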